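/- Let V and W be finite-dimensional real vector spaces, and let C ⊆ V and D ⊆ W be pointed polyhedral cones. A nonzero element w of the tensor product cone C ⊗ D spans an extreme ray of C ⊗ D if and only if w = x ⊗ y for some x spanning an extreme ray of C and some y spanning an extreme ray of D. In particular, every extreme ray of C ⊗ D is the tensor product of an extreme ray of C and an extreme ray of D. -/

import Mathlib

open scoped BigOperators TensorProduct

/-- A polyhedral cone: the set of all nonnegative linear combinations of a
finite set of vectors. -/
def IsPolyhedralCone {V : Type*} [AddCommGroup V] [Module ℝ V] (C : Set V) : Prop :=
  ∃ s : Finset V,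
    C = {x | ∃ c : V → ℝ, (∀ v, 0 ≤ c v) ∧ x = ∑ v ∈ s, c v • v}

/-- The tensor product cone of two cones: all nonnegative linear combinations of
elementary tensors `x ⊗ y` with `x ∈ C`, `y ∈ D`. -/
def tensorCone {V W : Type*} [AddCommGroup V] [Module ℝ V] [AddCommGroup W] [Module ℝ W]
    (C : Set V) (D : Set W) : Set (V ⊗[ℝ] W) :=
  {z | ∃ (n : ℕ) (c : Fin n → ℝ) (x : Fin n → V) (y : Fin n → W),
    (∀ i, 0 ≤ c i) ∧ (∀ i, x i ∈ C) ∧ (∀ i, y i ∈ D) ∧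
      z = ∑ i, c i • (x i ⊗ₜ[ℝ] y i)}

/-- A nonzero element `x` of a cone `C` spans an extreme ray of `C` if whenever
`y + z = x` with `y, z ∈ C`, `y` is a nonnegative scalar multiple of `x`. -/
def SpansExtremeRay {V : Type*} [AddCommGroup V] [Module ℝ V] (C : Set V) (x : V) : Prop :=
  x ∈ C ∧ x ≠ 0 ∧ ∀ y ∈ C, ∀ z ∈ C, y + z = x → ∃ t : ℝ, 0 ≤ t ∧ y = t • x

/-- auxiliary: the cone generated by a finite set. -/
def coneGen {V : Type*} [AddCommGroup V] [Module ℝ V] (s : Finset V) : Set V :=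
  {x | ∃ c : V → ℝ, (∀ v, 0 ≤ c v) ∧ x = ∑ v ∈ s, c v • v}


namespace coneGen

variable {V W : Type*} [AddCommGroup V] [Module ℝ V] [AddCommGroup W] [Module ℝ W]
  {s : Finset V}

theorem zero_mem (s : Finset V) : (0 : V) ∈ coneGen s :=
  ⟨0, fun _ => le_rfl, by simp⟩

theorem subset_of_mem {v : V} (hv : v ∈ s) : v ∈ coneGen s := by
  classical
  refine ⟨fun u => if u = v then 1 else 0, fun u => by positivity, ?_⟩
  simp only [ite_smul, one_smul, zero_smul]
  rw [show (∑ x ∈ s, if x = v then x else 0) = ∑ x ∈ s, if x = v then id x else 0 from rfl,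
    Finset.sum_ite_eq' s v id]
  simp [hv]

theorem add_mem {a b : V} (ha : a ∈ coneGen s) (hb : b ∈ coneGen s) :
    a + b ∈ coneGen s := by
  obtain ⟨c, hc, rfl⟩ := ha
  obtain ⟨d, hd, rfl⟩ := hb
  exact ⟨c + d, fun v => add_nonneg (hc v) (hd v), by
    rw [← Finset.sum_add_distrib]; simp [add_smul]⟩

theorem smul_mem {t : ℝ} (ht : 0 ≤ t) {a : V} (ha : a ∈ coneGen s) :
    t • a ∈ coneGen s := by
  obtain ⟨c, hc, rfl⟩ := ha
  exact ⟨t • c, fun v => mul_nonneg ht (hc v), by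
    rw [Finset.smul_sum]; simp [smul_smul]⟩

theorem mem_iff_fin {a : V} :
    a ∈ coneGen s ↔ ∃ (n : ℕ) (c : Fin n → ℝ) (v : Fin n → V),
      (∀ i, 0 ≤ c i) ∧ (∀ i, v i ∈ s) ∧ a = ∑ i, c i • v i := by
  classical
  constructor
  · rintro ⟨c, hc, rfl⟩
    refine ⟨s.card, fun i => c (s.equivFin.symm i), fun i => s.equivFin.symm i,
      fun i => hc _, fun i => (s.equivFin.symm i).2, ?_⟩
    rw [← Finset.sum_attach s (fun v => c v • v)]
    exact (Fintype.sum_equiv s.equivFin.symm _ _ (fun i => rfl)).symm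
  · rintro ⟨n, c, v, hc, hv, rfl⟩
    refine ⟨fun u => ∑ i ∈ Finset.univ.filter (fun i => v i = u), c i, fun u =>
      Finset.sum_nonneg fun i _ => hc i, ?_⟩
    rw [← Finset.sum_fiberwise_of_maps_to (fun i _ => hv i) (fun i => c i • v i)]
    refine Finset.sum_congr rfl fun u _ => ?_
    rw [Finset.sum_smul]
    refine Finset.sum_congr rfl fun i hi => ?_
    rw [(Finset.mem_filter.mp hi).2]

/-- image of a generated cone under a linear map -/
theorem image_mem [DecidableEq W] (f : V →ₗ[ℝ] W) {a : V} (ha : a ∈ coneGen s) :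
    f a ∈ coneGen (s.image f) := by
  classical
  rw [mem_iff_fin] at ha ⊢
  obtain ⟨n, c, v, hc, hv, rfl⟩ := ha
  exact ⟨n, c, fun i => f (v i), hc, fun i => Finset.mem_image_of_mem f (hv i), by
    simp [map_sum, map_smul]⟩

theorem sum_mem {ι : Type*} (I : Finset ι) (f : ι → V) (h : ∀ i ∈ I, f i ∈ coneGen s) :
    ∑ i ∈ I, f i ∈ coneGen s := by
  classical
  induction I using Finset.induction_on with
  | empty => simpa using zero_mem s
  | insert _ _ hni ih =>
    rw [Finset.sum_insert hni]
    exact add_mem (h _ (Finset.mem_insert_self _ _))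
      (ih fun i hi => h i (Finset.mem_insert_of_mem hi))

variable [FiniteDimensional ℝ V]

theorem exists_pos_functional
    (hp : ∀ a ∈ coneGen s, -a ∈ coneGen s → a = 0) :
    ∃ φ : V →ₗ[ℝ] ℝ, ∀ v ∈ s, v ≠ 0 → 0 < φ v := by
  classical
  set n := Module.finrank ℝ V with hn
  set e : V ≃ₗ[ℝ] (Fin n → ℝ) := (Module.finBasis ℝ V).equivFun with he
  set t : Finset V := s.filter (fun v => v ≠ 0) with ht
  set K : Set (Fin n → ℝ) := convexHull ℝ (↑(t.image e) : Set (Fin n → ℝ)) with hK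
  have h0K : (0 : Fin n → ℝ) ∉ K := by
    intro h0
    rw [hK, Finset.convexHull_eq] at h0
    obtain ⟨wt, hw0, hw1, hwc⟩ := h0
    -- a := pullback of the center of mass
    have hcm : (t.image e).centerMass wt id = ∑ y ∈ t.image e, wt y • y := by
      rw [Finset.centerMass, hw1, inv_one, one_smul]
      rfl
    have ha : ∑ y ∈ t.image e, wt y • (e.symm y) = 0 := by
      apply e.injective
      rw [map_sum, map_zero]
      simp only [map_smul, LinearEquiv.apply_symm_apply]
      rw [← hcm, hwc]
    -- some positive weight
    have hex : ∃ y₀ ∈ t.image e, 0 < wt y₀ := by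
      by_contra hcon
      push_neg at hcon
      have : ∑ y ∈ t.image e, wt y = 0 :=
        Finset.sum_eq_zero fun y hy => le_antisymm (hcon y hy) (hw0 y hy)
      rw [hw1] at this; norm_num at this
    obtain ⟨y₀, hy₀, hwy₀⟩ := hex
    have hmem : ∀ y ∈ t.image e, e.symm y ∈ s := by
      intro y hy
      obtain ⟨u, hu, rfl⟩ := Finset.mem_image.mp hy
      rw [LinearEquiv.symm_apply_apply]
      exact (Finset.mem_filter.mp hu).1
    have hne : (e.symm y₀ : V) ≠ 0 := by
      obtain ⟨u, hu, rfl⟩ := Finset.mem_image.mp hy₀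
      rw [LinearEquiv.symm_apply_apply]
      exact (Finset.mem_filter.mp hu).2
    -- split
    have hsplit : wt y₀ • (e.symm y₀ : V) + ∑ y ∈ (t.image e).erase y₀, wt y • (e.symm y) = 0 :=
      (Finset.add_sum_erase _ (fun y => wt y • (e.symm y : V)) hy₀).trans ha
    have hr : ∑ y ∈ (t.image e).erase y₀, wt y • (e.symm y) ∈ coneGen s := by
      apply sum_mem
      intro y hy
      exact smul_mem (hw0 y (Finset.mem_of_mem_erase hy))
        (subset_of_mem (hmem y (Finset.mem_of_mem_erase hy)))
    have hv0 : wt y₀ • (e.symm y₀ : V) ∈ coneGen s :=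
      smul_mem hwy₀.le (subset_of_mem (hmem y₀ hy₀))
    have hB : ∑ y ∈ (t.image e).erase y₀, wt y • (e.symm y : V)
        = -(wt y₀ • (e.symm y₀ : V)) := by
      rw [eq_neg_iff_add_eq_zero, add_comm]; exact hsplit
    have : wt y₀ • (e.symm y₀ : V) = 0 := hp _ hv0 (hB ▸ hr)
    exact hne (by simpa [smul_eq_zero, hwy₀.ne'] using this)
  have hconv : Convex ℝ K := convex_convexHull _ _
  have hcl : IsClosed K := ((Finset.finite_toSet _).isCompact_convexHull (𝕜 := ℝ)).isClosed
  obtain ⟨f, u, hfu, hfb⟩ := geometric_hahn_banach_point_closed hconv hcl h0K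
  refine ⟨(f : (Fin n → ℝ) →ₗ[ℝ] ℝ).comp (e : V →ₗ[ℝ] (Fin n → ℝ)), ?_⟩
  intro v hv hvne
  have hvt : v ∈ t := Finset.mem_filter.mpr ⟨hv, hvne⟩
  have : e v ∈ K := subset_convexHull ℝ _ (by exact_mod_cast Finset.mem_image_of_mem e hvt)
  have := hfb _ this
  have h0 : f 0 = 0 := map_zero f
  simp only [LinearMap.coe_comp, Function.comp_apply, LinearEquiv.coe_coe,
    ContinuousLinearMap.coe_coe]
  linarith [hfu, this, h0.symm ▸ hfu]

theorem exists_strict_functional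
    (hp : ∀ a ∈ coneGen s, -a ∈ coneGen s → a = 0) :
    ∃ φ : V →ₗ[ℝ] ℝ, (∀ a ∈ coneGen s, 0 ≤ φ a) ∧ (∀ a ∈ coneGen s, φ a = 0 → a = 0) := by
  classical
  obtain ⟨φ, hφ⟩ := exists_pos_functional hp
  have key : ∀ v ∈ s, 0 ≤ φ v := by
    intro v hv
    by_cases h : v = 0
    · simp [h]
    · exact (hφ v hv h).le
  refine ⟨φ, ?_, ?_⟩
  · rintro a ⟨c, hc, rfl⟩
    rw [map_sum]
    exact Finset.sum_nonneg fun v hv => by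
      rw [map_smul]; exact mul_nonneg (hc v) (key v hv)
  · rintro a ⟨c, hc, rfl⟩ hz
    rw [map_sum] at hz
    have hterm : ∀ v ∈ s, c v * φ v = 0 := by
      have := (Finset.sum_eq_zero_iff_of_nonneg (fun v hv => by
        rw [map_smul]; exact mul_nonneg (hc v) (key v hv))).mp hz
      intro v hv
      simpa [map_smul] using this v hv
    apply Finset.sum_eq_zero
    intro v hv
    by_cases h : v = 0
    · simp [h]
    · have : c v = 0 := by
        have := hterm v hv
        rcases mul_eq_zero.mp this with h' | h'
        · exact h'
        · exact absurd h' (hφ v hv h).ne'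
      simp [this]

omit [FiniteDimensional ℝ V] in
theorem mem_image_iff [DecidableEq W] (f : V →ₗ[ℝ] W) {a : W} :
    a ∈ coneGen (s.image f) ↔ ∃ A ∈ coneGen s, f A = a := by
  constructor
  · intro ha
    rw [mem_iff_fin] at ha
    obtain ⟨n, c, w, hc, hw, rfl⟩ := ha
    choose u hu hfu using fun i => Finset.mem_image.mp (hw i)
    refine ⟨∑ i, c i • u i, mem_iff_fin.mpr ⟨n, c, u, hc, hu, rfl⟩, ?_⟩
    simp only [map_sum, map_smul]
    exact Finset.sum_congr rfl fun i _ => by rw [hfu i]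
  · rintro ⟨A, hA, rfl⟩
    exact image_mem f hA


/-- an extreme ray of a pointed finitely generated cone is exposed -/
theorem exists_exposing_functional
    (hp : ∀ a ∈ coneGen s, -a ∈ coneGen s → a = 0)
    {x : V} (hx : SpansExtremeRay (coneGen s) x) :
    ∃ f : V →ₗ[ℝ] ℝ, f x = 0 ∧ (∀ a ∈ coneGen s, 0 ≤ f a) ∧
      (∀ a ∈ coneGen s, f a = 0 → ∃ t : ℝ, 0 ≤ t ∧ a = t • x) := by
  classical
  obtain ⟨hxC, hx0, hxe⟩ := hx
  set L : Submodule ℝ V := Submodule.span ℝ {x} with hL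
  set π : V →ₗ[ℝ] V ⧸ L := L.mkQ with hπ
  -- small helper : if a ∈ C and a = t • x with t < 0 then a = 0
  have hneg : ∀ a ∈ coneGen s, ∀ t : ℝ, a = t • x → ∃ r : ℝ, 0 ≤ r ∧ a = r • x := by
    intro a ha t hat
    rcases le_or_gt 0 t with h | h
    · exact ⟨t, h, hat⟩
    · have hma : -a ∈ coneGen s := by
        rw [hat, ← neg_smul]
        exact smul_mem (by linarith) hxC
      have := hp a ha hma
      exact ⟨0, le_rfl, by rw [this, zero_smul]⟩
  -- pointedness of the image cone
  have hpq : ∀ a ∈ coneGen (s.image π), -a ∈ coneGen (s.image π) → a = 0 := by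
    intro a ha hna
    obtain ⟨A, hA, rfl⟩ := (mem_image_iff π).mp ha
    obtain ⟨B, hB, hBe⟩ := (mem_image_iff π).mp hna
    have hAB : A + B ∈ L := by
      rw [← Submodule.Quotient.mk_eq_zero L]
      have : π (A + B) = 0 := by rw [map_add, hBe]; abel
      exact this
    obtain ⟨t, hts⟩ := Submodule.mem_span_singleton.mp hAB
    rcases le_or_gt t 0 with h | h
    · -- A + B = t • x with t ≤ 0 forces A + B = 0, then A = 0
      have h1 : -(A + B) ∈ coneGen s := by
        rw [← hts, ← neg_smul]
        exact smul_mem (by linarith) hxC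
      have h2 : A + B = 0 := hp _ (add_mem hA hB) h1
      have h3 : -A ∈ coneGen s := by
        rw [show -A = B from by rw [neg_eq_iff_add_eq_zero]; exact h2]
        exact hB
      have := hp A hA h3
      rw [this, map_zero]
    · -- t > 0 : extremality gives A ∈ ℝ₊ x
      have hsum : t⁻¹ • A + t⁻¹ • B = x := by
        rw [← smul_add, ← hts]
        rw [smul_smul, inv_mul_cancel₀ h.ne', one_smul]
      obtain ⟨r, _, hr⟩ := hxe _ (smul_mem (by positivity) hA) _ (smul_mem (by positivity) hB) hsum
      have : A = (t * r) • x := by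
        have := congrArg (t • ·) hr
        simpa [smul_smul, mul_inv_cancel₀ h.ne'] using this
      rw [this, map_smul]
      have : π x = 0 := by
        rw [hπ, Submodule.mkQ_apply, Submodule.Quotient.mk_eq_zero]
        exact Submodule.mem_span_singleton_self x
      rw [this, smul_zero]
  obtain ⟨φq, hφ1, hφ2⟩ := exists_strict_functional hpq
  have hπx : π x = 0 := by
    rw [hπ, Submodule.mkQ_apply, Submodule.Quotient.mk_eq_zero]
    exact Submodule.mem_span_singleton_self x
  refine ⟨φq.comp π, by simp [hπx], ?_, ?_⟩
  · intro a ha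
    exact hφ1 _ (image_mem π ha)
  · intro a ha hfa
    have : π a = 0 := hφ2 _ (image_mem π ha) hfa
    have haL : a ∈ L := by rwa [hπ, Submodule.mkQ_apply, Submodule.Quotient.mk_eq_zero] at this
    obtain ⟨t, ht⟩ := Submodule.mem_span_singleton.mp haL
    exact hneg a ha t ht.symm


end coneGen

section TensorHelpers

variable {V W : Type*} [AddCommGroup V] [Module ℝ V] [AddCommGroup W] [Module ℝ W]

/-- if `u ⊗ v = 0` and `v ≠ 0` then `u = 0` (vector spaces over ℝ). -/
theorem tmul_eq_zero_left {u : V} {v : W} (hv : v ≠ 0) (h : u ⊗ₜ[ℝ] v = 0) : u = 0 := by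
  have : ¬ (∀ g : Module.Dual ℝ W, g v = 0) := by
    rw [Module.forall_dual_apply_eq_zero_iff]; exact hv
  push_neg at this
  obtain ⟨g, hg⟩ := this
  have := congrArg ((TensorProduct.rid ℝ V).toLinearMap.comp (LinearMap.lTensor V g)) h
  simp only [map_zero, LinearMap.coe_comp, Function.comp_apply, LinearMap.lTensor_tmul,
    LinearEquiv.coe_coe, TensorProduct.rid_tmul] at this
  exact (smul_eq_zero.mp this).resolve_left hg

theorem tmul_eq_zero_right {u : V} {v : W} (hu : u ≠ 0) (h : u ⊗ₜ[ℝ] v = 0) : v = 0 := by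
  have : ¬ (∀ g : Module.Dual ℝ V, g u = 0) := by
    rw [Module.forall_dual_apply_eq_zero_iff]; exact hu
  push_neg at this
  obtain ⟨g, hg⟩ := this
  have := congrArg ((TensorProduct.lid ℝ W).toLinearMap.comp (LinearMap.rTensor W g)) h
  simp only [map_zero, LinearMap.coe_comp, Function.comp_apply, LinearMap.rTensor_tmul,
    LinearEquiv.coe_coe, TensorProduct.lid_tmul] at this
  exact (smul_eq_zero.mp this).resolve_left hg

variable {C : Set V} {D : Set W}

theorem tensorCone.tmul_mem {x : V} {y : W} (hx : x ∈ C) (hy : y ∈ D) :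
    x ⊗ₜ[ℝ] y ∈ tensorCone C D :=
  ⟨1, fun _ => 1, fun _ => x, fun _ => y, fun _ => zero_le_one, fun _ => hx, fun _ => hy, by simp⟩

theorem tensorCone.smul_tmul_mem {t : ℝ} (ht : 0 ≤ t) {x : V} {y : W} (hx : x ∈ C) (hy : y ∈ D) :
    t • (x ⊗ₜ[ℝ] y) ∈ tensorCone C D :=
  ⟨1, fun _ => t, fun _ => x, fun _ => y, fun _ => ht, fun _ => hx, fun _ => hy, by simp⟩

end TensorHelpers

theorem stmt_3 {V W : Type*}
    [AddCommGroup V] [Module ℝ V] [FiniteDimensional ℝ V]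
    [AddCommGroup W] [Module ℝ W] [FiniteDimensional ℝ W]
    (C : Set V) (D : Set W)
    (hC : IsPolyhedralCone C) (hD : IsPolyhedralCone D)
    (hCpointed : C ∩ (-C) = {0}) (hDpointed : D ∩ (-D) = {0})
    (w : V ⊗[ℝ] W) (hw : w ∈ tensorCone C D) (hw0 : w ≠ 0) :
    SpansExtremeRay (tensorCone C D) w ↔
      ∃ (x : V) (y : W), SpansExtremeRay C x ∧ SpansExtremeRay D y ∧ w = x ⊗ₜ[ℝ] y := by
  classical
  obtain ⟨sC, hsC⟩ := hC
  obtain ⟨sD, hsD⟩ := hD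
  have hCg : C = coneGen sC := hsC
  have hDg : D = coneGen sD := hsD
  have hCp : ∀ a ∈ C, -a ∈ C → a = 0 := by
    intro a ha hna
    have : a ∈ C ∩ (-C) := ⟨ha, Set.mem_neg.mpr (by simpa using hna)⟩
    rw [hCpointed] at this
    exact this
  have hDp : ∀ a ∈ D, -a ∈ D → a = 0 := by
    intro a ha hna
    have : a ∈ D ∩ (-D) := ⟨ha, Set.mem_neg.mpr (by simpa using hna)⟩
    rw [hDpointed] at this
    exact this
  constructor
  · -- forward direction
    rintro ⟨hwm, -, hwe⟩
    obtain ⟨n, c, xs, ys, hc, hxs, hys, hsum⟩ := hwm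
    -- each term of the decomposition is a nonnegative multiple of w
    have hterm : ∀ i : Fin n, ∃ t : ℝ, 0 ≤ t ∧ c i • (xs i ⊗ₜ[ℝ] ys i) = t • w := by
      intro i
      set c' : Fin n → ℝ := fun j => if j = i then 0 else c j with hc'
      have hrest : (∑ j ∈ Finset.univ.erase i, c j • (xs j ⊗ₜ[ℝ] ys j)) ∈ tensorCone C D := by
        refine ⟨n, c', xs, ys, fun j => ?_, hxs, hys, ?_⟩
        · by_cases h : j = i <;> simp [hc', h, hc j]
        · rw [← Finset.add_sum_erase _ (fun j => c' j • (xs j ⊗ₜ[ℝ] ys j))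
            (Finset.mem_univ i)]
          simp only [hc', if_pos rfl, zero_smul, zero_add]
          exact Finset.sum_congr rfl fun j hj => by
            rw [if_neg (Finset.ne_of_mem_erase hj)]
      have hadd : c i • (xs i ⊗ₜ[ℝ] ys i) +
          ∑ j ∈ Finset.univ.erase i, c j • (xs j ⊗ₜ[ℝ] ys j) = w := by
        rw [Finset.add_sum_erase _ (fun j => c j • (xs j ⊗ₜ[ℝ] ys j)) (Finset.mem_univ i)]
        exact hsum.symm
      exact hwe _ (tensorCone.smul_tmul_mem (hc i) (hxs i) (hys i)) _ hrest hadd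
    choose tt htt0 htt using hterm
    have hsum2 : w = (∑ i, tt i) • w := by
      conv_lhs => rw [hsum]
      rw [Finset.sum_smul]
      exact Finset.sum_congr rfl fun i _ => htt i
    have hsum1 : (∑ i, tt i) = 1 := by
      by_contra hne
      apply hw0
      have : (1 - ∑ i, tt i) • w = 0 := by
        rw [sub_smul, one_smul, ← hsum2, sub_self]
      rcases smul_eq_zero.mp this with h | h
      · exact absurd (by linarith [sub_eq_zero.mp (by linarith [h] : (1:ℝ) - ∑ i, tt i = 0)]) hne
      · exact h
    have hex : ∃ i, 0 < tt i := by
      by_contra hcon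
      push_neg at hcon
      have : (∑ i, tt i) = 0 :=
        Finset.sum_eq_zero fun i _ => le_antisymm (hcon i) (htt0 i)
      rw [hsum1] at this; norm_num at this
    obtain ⟨i, hi⟩ := hex
    -- w is a positive multiple of a single elementary tensor
    set x' : V := ((tt i)⁻¹ * c i) • xs i with hx'
    set y' : W := ys i with hy'
    have hweq : w = x' ⊗ₜ[ℝ] y' := by
      have := htt i
      have h2 : w = (tt i)⁻¹ • (c i • (xs i ⊗ₜ[ℝ] ys i)) := by
        rw [this, smul_smul, inv_mul_cancel₀ hi.ne', one_smul]
      rw [h2, smul_smul, hx', hy', TensorProduct.smul_tmul']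
    have hx'C : x' ∈ C := by
      rw [hCg] at hxs ⊢
      exact coneGen.smul_mem (mul_nonneg (inv_nonneg.mpr hi.le) (hc i)) (hxs i)
    have hy'D : y' ∈ D := hys i
    have hx'0 : x' ≠ 0 := fun h => hw0 (by rw [hweq, h, TensorProduct.zero_tmul])
    have hy'0 : y' ≠ 0 := fun h => hw0 (by rw [hweq, h, TensorProduct.tmul_zero])
    refine ⟨x', y', ⟨hx'C, hx'0, ?_⟩, ⟨hy'D, hy'0, ?_⟩, hweq⟩
    · -- x' spans an extreme ray of C
      intro a ha b hb hab
      have h1 : a ⊗ₜ[ℝ] y' + b ⊗ₜ[ℝ] y' = w := by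
        rw [← TensorProduct.add_tmul, hab, hweq]
      obtain ⟨t, ht0, hte⟩ := hwe _ (tensorCone.tmul_mem ha hy'D) _ (tensorCone.tmul_mem hb hy'D) h1
      refine ⟨t, ht0, ?_⟩
      have : (a - t • x') ⊗ₜ[ℝ] y' = 0 := by
        rw [TensorProduct.sub_tmul, sub_eq_zero, hte, hweq, TensorProduct.smul_tmul']
      have := tmul_eq_zero_left hy'0 this
      rw [sub_eq_zero] at this
      exact this
    · -- y' spans an extreme ray of D
      intro a ha b hb hab
      have h1 : x' ⊗ₜ[ℝ] a + x' ⊗ₜ[ℝ] b = w := by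
        rw [← TensorProduct.tmul_add, hab, hweq]
      obtain ⟨t, ht0, hte⟩ := hwe _ (tensorCone.tmul_mem hx'C ha) _ (tensorCone.tmul_mem hx'C hb) h1
      refine ⟨t, ht0, ?_⟩
      have : x' ⊗ₜ[ℝ] (a - t • y') = 0 := by
        rw [TensorProduct.tmul_sub, sub_eq_zero, hte, hweq, TensorProduct.tmul_smul]
      have := tmul_eq_zero_right hx'0 this
      rw [sub_eq_zero] at this
      exact this
  · -- converse direction
    rintro ⟨x, y, hxER, hyER, rfl⟩
    obtain ⟨hxC, hx0, hxe⟩ := hxER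
    obtain ⟨hyD, hy0, hye⟩ := hyER
    rw [hCg] at hxC hxe
    rw [hDg] at hyD hye
    -- functionals
    obtain ⟨φ, hφ1, hφ2⟩ := coneGen.exists_strict_functional
      (by rw [hCg] at hCp; exact fun a ha hna => hCp a ha hna)
    obtain ⟨ψ, hψ1, hψ2⟩ := coneGen.exists_strict_functional
      (by rw [hDg] at hDp; exact fun a ha hna => hDp a ha hna)
    obtain ⟨f, hfx, hf1, hf2⟩ := coneGen.exists_exposing_functional
      (by rw [hCg] at hCp; exact fun a ha hna => hCp a ha hna) ⟨hxC, hx0, hxe⟩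
    obtain ⟨g, hgy, hg1, hg2⟩ := coneGen.exists_exposing_functional
      (by rw [hDg] at hDp; exact fun a ha hna => hDp a ha hna) ⟨hyD, hy0, hye⟩
    set B : V →ₗ[ℝ] W →ₗ[ℝ] ℝ := LinearMap.mk₂ ℝ (fun u v => f u * ψ v + φ u * g v)
      (fun u u' v => by simp [map_add]; ring)
      (fun r u v => by simp [map_smul]; ring)
      (fun u v v' => by simp [map_add]; ring)
      (fun r u v => by simp [map_smul]; ring) with hB
    set h : V ⊗[ℝ] W →ₗ[ℝ] ℝ := TensorProduct.lift B with hh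
    have hhtmul : ∀ (u : V) (v : W), h (u ⊗ₜ[ℝ] v) = f u * ψ v + φ u * g v := by
      intro u v
      rw [hh, TensorProduct.lift.tmul, hB, LinearMap.mk₂_apply]
    have hterm_nn : ∀ (u : V) (v : W), u ∈ coneGen sC → v ∈ coneGen sD →
        0 ≤ f u * ψ v ∧ 0 ≤ φ u * g v := fun u v hu hv =>
      ⟨mul_nonneg (hf1 u hu) (hψ1 v hv), mul_nonneg (hφ1 u hu) (hg1 v hv)⟩
    have hnn : ∀ z ∈ tensorCone C D, 0 ≤ h z := by
      rintro z ⟨m, cc, us, vs, hcc, hus, hvs, rfl⟩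
      rw [map_sum]
      refine Finset.sum_nonneg fun j _ => ?_
      rw [map_smul, hhtmul]
      have := hterm_nn (us j) (vs j) (hCg ▸ hus j) (hDg ▸ hvs j)
      have : (0:ℝ) ≤ f (us j) * ψ (vs j) + φ (us j) * g (vs j) := add_nonneg this.1 this.2
      exact mul_nonneg (hcc j) this
    have hhw : h (x ⊗ₜ[ℝ] y) = 0 := by
      rw [hhtmul, hfx, hgy, zero_mul, mul_zero, add_zero]
    refine ⟨tensorCone.tmul_mem (hCg ▸ hxC) (hDg ▸ hyD), hw0, ?_⟩
    intro a ha b hb hab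
    have hha : h a = 0 := by
      have h1 : h a + h b = 0 := by rw [← map_add, hab, hhw]
      linarith [hnn a ha, hnn b hb]
    obtain ⟨m, cc, us, vs, hcc, hus, hvs, haeq⟩ := ha
    -- each elementary term in a is a nonnegative multiple of x ⊗ y
    have hkey : ∀ j : Fin m, ∃ lam : ℝ, 0 ≤ lam ∧
        cc j • (us j ⊗ₜ[ℝ] vs j) = lam • (x ⊗ₜ[ℝ] y) := by
      intro j
      rcases eq_or_lt_of_le (hcc j) with hc0 | hcpos
      · exact ⟨0, le_rfl, by rw [← hc0, zero_smul, zero_smul]⟩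
      rcases eq_or_ne (us j) 0 with hu0 | hu0
      · exact ⟨0, le_rfl, by rw [hu0, TensorProduct.zero_tmul, smul_zero, zero_smul]⟩
      rcases eq_or_ne (vs j) 0 with hv0 | hv0
      · exact ⟨0, le_rfl, by rw [hv0, TensorProduct.tmul_zero, smul_zero, zero_smul]⟩
      have husC : us j ∈ coneGen sC := hCg ▸ hus j
      have hvsD : vs j ∈ coneGen sD := hDg ▸ hvs j
      -- the j-th term of h a vanishes
      have hzero : f (us j) * ψ (vs j) = 0 ∧ φ (us j) * g (vs j) = 0 := by
        have hterms : ∀ k : Fin m, 0 ≤ cc k * (f (us k) * ψ (vs k) + φ (us k) * g (vs k)) := by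
          intro k
          have := hterm_nn (us k) (vs k) (hCg ▸ hus k) (hDg ▸ hvs k)
          exact mul_nonneg (hcc k) (add_nonneg this.1 this.2)
        have hsz : ∑ k, cc k * (f (us k) * ψ (vs k) + φ (us k) * g (vs k)) = 0 := by
          rw [← hha, haeq, map_sum]
          exact Finset.sum_congr rfl fun k _ => by rw [map_smul, hhtmul, smul_eq_mul]
        have := (Finset.sum_eq_zero_iff_of_nonneg (fun k _ => hterms k)).mp hsz j
          (Finset.mem_univ j)
        have hsum0 : f (us j) * ψ (vs j) + φ (us j) * g (vs j) = 0 := by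
          rcases mul_eq_zero.mp this with h' | h'
          · exact absurd h' hcpos.ne'
          · exact h'
        have hp := hterm_nn (us j) (vs j) husC hvsD
        constructor <;> linarith [hp.1, hp.2]
      have hφpos : 0 < φ (us j) := by
        rcases eq_or_lt_of_le (hφ1 _ husC) with h' | h'
        · exact absurd (hφ2 _ husC h'.symm) hu0
        · exact h'
      have hgv : g (vs j) = 0 := by
        rcases mul_eq_zero.mp hzero.2 with h' | h'
        · exact absurd h' hφpos.ne'
        · exact h'
      obtain ⟨β, hβ0, hβ⟩ := hg2 _ hvsD hgv
      have hβpos : 0 < β := by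
        rcases eq_or_lt_of_le hβ0 with h' | h'
        · exact absurd (by rw [hβ, ← h', zero_smul]) hv0
        · exact h'
      have hψpos : 0 < ψ (vs j) := by
        have hψy : 0 < ψ y := by
          rcases eq_or_lt_of_le (hψ1 _ hyD) with h' | h'
          · exact absurd (hψ2 _ hyD h'.symm) hy0
          · exact h'
        rw [hβ, map_smul, smul_eq_mul]
        positivity
      have hfu : f (us j) = 0 := by
        rcases mul_eq_zero.mp hzero.1 with h' | h'
        · exact h'
        · exact absurd h' hψpos.ne'
      obtain ⟨α, hα0, hα⟩ := hf2 _ husC hfu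
      refine ⟨cc j * α * β, by positivity, ?_⟩
      have h1 : (α • x) ⊗ₜ[ℝ] (β • y) = (α * β) • (x ⊗ₜ[ℝ] y) := by
        rw [← TensorProduct.smul_tmul', TensorProduct.tmul_smul, smul_smul]
      rw [hα, hβ, h1, smul_smul, mul_assoc]
    choose lam hlam0 hlam using hkey
    refine ⟨∑ j, lam j, Finset.sum_nonneg fun j _ => hlam0 j, ?_⟩
    rw [haeq, Finset.sum_congr rfl fun j _ => hlam j, ← Finset.sum_smul]
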